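/- For every fixed positive integer n and nonnegative integer r ≥ 1, the sequence k ↦ |u_r(n,k)|, k = 0,...,n, is strictly log-concave: |u_r(n,k)|² > |u_r(n,k-1)|·|u_r(n,k+1)| for 1 ≤ k ≤ n-1. -/
import Mathlib

/-- `centralu r n k` is the r-central factorial number with even indices of the first kind. -/
def centralu (r : ℕ) : ℕ → ℕ → ℤ
  | 0, 0 => 1
  | 0, _ + 1 => 0
  | n + 1, 0 => (-1) ^ (n + 1) * ∏ i ∈ Finset.range (n + 1), ((i : ℤ) ^ 2 + r)
  | n + 1, k + 1 => centralu r n k - ((n : ℤ) ^ 2 + r) * centralu r n (k + 1)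

/-- The unsigned version. -/
def cu (r : ℕ) : ℕ → ℕ → ℤ
  | 0, 0 => 1
  | 0, _ + 1 => 0
  | n + 1, 0 => ((n : ℤ) ^ 2 + r) * cu r n 0
  | n + 1, k + 1 => cu r n k + ((n : ℤ) ^ 2 + r) * cu r n (k + 1)

lemma t_pos (r n : ℕ) (hr : 1 ≤ r) : 0 < ((n : ℤ) ^ 2 + r) := by
  have : (1 : ℤ) ≤ r := by exact_mod_cast hr
  positivity

lemma cu_nonneg (r : ℕ) : ∀ n k, 0 ≤ cu r n k := by
  intro n
  induction n with
  | zero => intro k; cases k <;> simp [cu]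
  | succ n ih =>
    intro k
    have ht : (0:ℤ) ≤ (n : ℤ) ^ 2 + r := by positivity
    cases k with
    | zero => simpa [cu] using mul_nonneg ht (ih 0)
    | succ k => simpa [cu] using add_nonneg (ih k) (mul_nonneg ht (ih (k+1)))

lemma cu_eq_zero (r : ℕ) : ∀ n k, n < k → cu r n k = 0 := by
  intro n
  induction n with
  | zero =>
    intro k hk
    cases k with
    | zero => omega
    | succ k => simp [cu]
  | succ n ih =>
    intro k hk
    cases k with
    | zero => omega
    | succ k =>
      have h1 : cu r n k = 0 := ih k (by omega)
      have h2 : cu r n (k+1) = 0 := ih (k+1) (by omega)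
      simp [cu, h1, h2]

lemma cu_diag (r : ℕ) : ∀ n, cu r n n = 1 := by
  intro n
  induction n with
  | zero => simp [cu]
  | succ n ih => simp [cu, ih, cu_eq_zero r n (n+1) (by omega)]

lemma cu_pos (r : ℕ) (hr : 1 ≤ r) : ∀ n k, k ≤ n → 0 < cu r n k := by
  intro n
  induction n with
  | zero =>
    intro k hk
    interval_cases k
    simp [cu]
  | succ n ih =>
    intro k hk
    cases k with
    | zero =>
      have := ih 0 (by omega)
      simpa [cu] using mul_pos (t_pos r n hr) this
    | succ k =>
      have h1 : 0 < cu r n k := ih k (by omega)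
      have h2 : 0 ≤ cu r n (k+1) := cu_nonneg r n (k+1)
      have ht := (t_pos r n hr).le
      have : 0 < cu r n k + ((n : ℤ)^2 + r) * cu r n (k+1) := by nlinarith
      simpa [cu] using this

lemma cu_logconcave (r : ℕ) (hr : 1 ≤ r) :
    ∀ n k, cu r n k * cu r n (k+2) ≤ cu r n (k+1)^2 := by
  intro n
  induction n with
  | zero =>
    intro k
    have h : cu r 0 (k+2) = 0 := cu_eq_zero r 0 (k+2) (by omega)
    rw [h, mul_zero]
    positivity
  | succ n ih =>
    have hnn := cu_nonneg r n
    have ht : (0:ℤ) < (n : ℤ)^2 + r := t_pos r n hr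
    -- ratio lemma at row n
    have L4 : ∀ k, cu r n k * cu r n (k+3) ≤ cu r n (k+1) * cu r n (k+2) := by
      intro k
      by_cases h1 : n < k + 1
      · have hz : cu r n (k+3) = 0 := cu_eq_zero r n (k+3) (by omega)
        rw [hz, mul_zero]
        exact mul_nonneg (hnn _) (hnn _)
      · by_cases h2 : n < k + 2
        · have hz3 : cu r n (k+3) = 0 := cu_eq_zero r n (k+3) (by omega)
          rw [hz3, mul_zero]
          exact mul_nonneg (hnn _) (hnn _)
        · have p1 : 0 < cu r n (k+1) := cu_pos r hr n (k+1) (by omega)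
          have p2 : 0 < cu r n (k+2) := cu_pos r hr n (k+2) (by omega)
          have a1 := ih k
          have a2 := ih (k+1)
          have hprod : (cu r n k * cu r n (k+3)) * (cu r n (k+1) * cu r n (k+2)) ≤
              (cu r n (k+1) * cu r n (k+2))^2 := by nlinarith [hnn k, hnn (k+3), mul_nonneg (hnn k) (hnn (k+2))]
          have hpp : 0 < cu r n (k+1) * cu r n (k+2) := mul_pos p1 p2
          nlinarith [hprod, hpp]
    intro k
    cases k with
    | zero =>
      have e0 : cu r (n+1) 0 = ((n : ℤ)^2 + r) * cu r n 0 := rfl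
      have e1 : cu r (n+1) 1 = cu r n 0 + ((n : ℤ)^2 + r) * cu r n 1 := rfl
      have e2 : cu r (n+1) 2 = cu r n 1 + ((n : ℤ)^2 + r) * cu r n 2 := rfl
      rw [e0, e1, e2]
      have := ih 0
      nlinarith [mul_nonneg ht.le (mul_nonneg (hnn 0) (hnn 1)), sq_nonneg (cu r n 0),
        mul_le_mul_of_nonneg_left this (mul_nonneg ht.le ht.le)]
    | succ k =>
      have e1 : cu r (n+1) (k+1) = cu r n k + ((n : ℤ)^2 + r) * cu r n (k+1) := rfl
      have e2 : cu r (n+1) (k+2) = cu r n (k+1) + ((n : ℤ)^2 + r) * cu r n (k+2) := rfl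
      have e3 : cu r (n+1) (k+3) = cu r n (k+2) + ((n : ℤ)^2 + r) * cu r n (k+3) := rfl
      rw [e1, e2, e3]
      have a1 := ih k
      have a2 := ih (k+1)
      have a4 := L4 k
      nlinarith [mul_nonneg (hnn (k+1)) (hnn (k+2)), mul_le_mul_of_nonneg_left a4 ht.le,
        mul_le_mul_of_nonneg_left a2 (mul_nonneg ht.le ht.le)]

lemma cu_strict (r : ℕ) (hr : 1 ≤ r) :
    ∀ n k, k + 1 ≤ n → cu r n k * cu r n (k+2) < cu r n (k+1)^2 := by
  intro n
  induction n with
  | zero => intro k hk; omega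
  | succ n ih =>
    intro k hk
    have hnn := cu_nonneg r n
    have ht : (0:ℤ) < (n : ℤ)^2 + r := t_pos r n hr
    by_cases htop : k + 1 = n + 1
    · -- top case: k = n
      have hz : cu r (n+1) (k+2) = 0 := cu_eq_zero r (n+1) (k+2) (by omega)
      have hd : cu r (n+1) (k+1) = 1 := by rw [htop]; exact cu_diag r (n+1)
      rw [hz, mul_zero, hd]
      norm_num
    · have hk' : k + 1 ≤ n := by omega
      cases k with
      | zero =>
        have e0 : cu r (n+1) 0 = ((n : ℤ)^2 + r) * cu r n 0 := rfl
        have e1 : cu r (n+1) 1 = cu r n 0 + ((n : ℤ)^2 + r) * cu r n 1 := rfl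
        have e2 : cu r (n+1) 2 = cu r n 1 + ((n : ℤ)^2 + r) * cu r n 2 := rfl
        rw [e0, e1, e2]
        have a1 := cu_logconcave r hr n 0
        have p0 : 0 < cu r n 0 := cu_pos r hr n 0 (by omega)
        nlinarith [hnn 1, hnn 2, mul_nonneg (hnn 0) (hnn 1), sq_nonneg (cu r n 0),
          mul_le_mul_of_nonneg_left a1 (mul_nonneg ht.le ht.le), mul_nonneg ht.le (mul_nonneg (hnn 0) (hnn 1))]
      | succ k =>
        have e1 : cu r (n+1) (k+1) = cu r n k + ((n : ℤ)^2 + r) * cu r n (k+1) := rfl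
        have e2 : cu r (n+1) (k+2) = cu r n (k+1) + ((n : ℤ)^2 + r) * cu r n (k+2) := rfl
        have e3 : cu r (n+1) (k+3) = cu r n (k+2) + ((n : ℤ)^2 + r) * cu r n (k+3) := rfl
        rw [e1, e2, e3]
        have a1 := cu_logconcave r hr n k
        have a3 : cu r n (k+1) * cu r n (k+3) < cu r n (k+2)^2 := ih (k+1) (by omega)
        -- L4 at row n
        have a4 : cu r n k * cu r n (k+3) ≤ cu r n (k+1) * cu r n (k+2) := by
          by_cases h1 : n < k + 2
          · have hz : cu r n (k+3) = 0 := cu_eq_zero r n (k+3) (by omega)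
            rw [hz, mul_zero]
            exact mul_nonneg (hnn _) (hnn _)
          · have p1 : 0 < cu r n (k+1) := cu_pos r hr n (k+1) (by omega)
            have p2 : 0 < cu r n (k+2) := cu_pos r hr n (k+2) (by omega)
            have b1 := cu_logconcave r hr n k
            have b2 := cu_logconcave r hr n (k+1)
            have hprod : (cu r n k * cu r n (k+3)) * (cu r n (k+1) * cu r n (k+2)) ≤
                (cu r n (k+1) * cu r n (k+2))^2 := by
              nlinarith [hnn k, hnn (k+3), mul_nonneg (hnn k) (hnn (k+2))]
            nlinarith [mul_pos p1 p2]
        nlinarith [mul_nonneg ht.le (mul_nonneg (hnn (k+1)) (hnn (k+2))),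
          mul_le_mul_of_nonneg_left a4 ht.le,
          mul_lt_mul_of_pos_left a3 (mul_pos ht ht)]

lemma cu_prod (r : ℕ) : ∀ n, cu r n 0 = ∏ i ∈ Finset.range n, ((i : ℤ)^2 + r) := by
  intro n
  induction n with
  | zero => simp [cu]
  | succ n ih => rw [Finset.prod_range_succ, ← ih]; show ((n:ℤ)^2 + r) * cu r n 0 = _; ring

lemma centralu_eq (r : ℕ) : ∀ n k, centralu r n k = (-1)^(n+k) * cu r n k := by
  intro n
  induction n with
  | zero =>
    intro k
    cases k with
    | zero => simp [centralu, cu]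
    | succ k => simp [centralu, cu]
  | succ n ih =>
    intro k
    cases k with
    | zero =>
      show (-1) ^ (n + 1) * ∏ i ∈ Finset.range (n + 1), ((i : ℤ) ^ 2 + r) = _
      rw [← cu_prod r (n+1)]
    | succ k =>
      show centralu r n k - ((n : ℤ)^2 + r) * centralu r n (k+1) = _
      rw [ih k, ih (k+1)]
      have : cu r (n+1) (k+1) = cu r n k + ((n : ℤ)^2 + r) * cu r n (k+1) := rfl
      rw [this]
      rw [show n + 1 + (k + 1) = (n + k) + 2 by ring, show n + (k+1) = (n+k)+1 by ring]
      ring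

lemma abs_centralu (r n k : ℕ) : |centralu r n k| = cu r n k := by
  rw [centralu_eq r n k, abs_mul, abs_pow, abs_neg, abs_one, one_pow, one_mul,
    abs_of_nonneg (cu_nonneg r n k)]

theorem centralu_abs_strict_log_concave (r n k : ℕ) (hr : 1 ≤ r) (hn : 1 ≤ n)
    (hk : 1 ≤ k) (hkn : k ≤ n - 1) :
    |centralu r n (k - 1)| * |centralu r n (k + 1)| < |centralu r n k| ^ 2 := by
  rw [abs_centralu, abs_centralu, abs_centralu]
  obtain ⟨j, rfl⟩ : ∃ j, k = j + 1 := ⟨k - 1, by omega⟩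
  have h := cu_strict r hr n j (by omega)
  simpa using h
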